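/- arXiv:1211.0192 — 14 statements merged into one kernel-verified Lean document; each statement's English description precedes it below -/
import Mathlib

section
/- Let X, Y be Hilbert spaces and T : X → Y a bounded linear operator with closed range, and let T† denote its Moore–Penrose inverse. Then for every x ∈ X, the element (I − T†T)x lies in the kernel of T and ‖x − (I − T†T)x‖ ≤ ‖T†‖·‖Tx‖; in particular T has Hyers–Ulam stability with constant ‖T†‖. -/
open ContinuousLinearMap

/-- If `T` is a bounded operator between Hilbert spaces with closed range and
Moore--Penrose inverse `T'`, then `(I - T'T)x ∈ ker T` and `‖x - (I - T'T)x‖ ≤ ‖T'‖ * ‖T x‖`;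
in particular `T` has Hyers--Ulam stability with constant `‖T'‖`. -/
theorem hyersUlam_of_moorePenrose
    {X Y : Type*} [NormedAddCommGroup X] [InnerProductSpace ℝ X] [CompleteSpace X]
    [NormedAddCommGroup Y] [InnerProductSpace ℝ Y] [CompleteSpace Y]
    (T : X →L[ℝ] Y) (T' : Y →L[ℝ] X)
    (hclosed : IsClosed (LinearMap.range (T : X →ₗ[ℝ] Y) : Set Y))
    (h1 : T ∘L T' ∘L T = T) (h2 : T' ∘L T ∘L T' = T')
    (h3 : adjoint (T ∘L T') = T ∘L T') (h4 : adjoint (T' ∘L T) = T' ∘L T) :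
    ∀ x : X, (x - T' (T x)) ∈ LinearMap.ker (T : X →ₗ[ℝ] Y) ∧
      ‖x - (x - T' (T x))‖ ≤ ‖T'‖ * ‖T x‖ := by
  intro x
  constructor
  · have := congrArg (fun S => S x) h1
    simp only [comp_apply] at this
    simp [LinearMap.mem_ker, map_sub, this]
  · simp only [sub_sub_cancel]
    exact T'.le_opNorm (T x)
end

section
/- Let X, Y be Hilbert spaces and T : X → Y a bounded linear operator with closed range and Moore–Penrose inverse T†. If K > 0 is any Hyers–Ulam stability constant for T (i.e., for every x ∈ X there exists x₀ ∈ N(T) with ‖x − x₀‖ ≤ K‖Tx‖), then K ≥ ‖T†‖. Consequently the infimum of all Hyers–Ulam stability constants for T equals ‖T†‖. -/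
open ContinuousLinearMap

private lemma proj_norm_le {X : Type*} [NormedAddCommGroup X] [InnerProductSpace ℝ X]
    [CompleteSpace X] (P : X →L[ℝ] X) (hP : P ∘L P = P) (hPa : adjoint P = P) (z : X) :
    ‖P z‖ ≤ ‖z‖ := by
  have hsq : ‖P z‖ ^ 2 = inner ℝ z (P z) := by
    have h1 : (‖P z‖ : ℝ) ^ 2 = inner ℝ (P z) (P z) := (real_inner_self_eq_norm_sq _).symm
    rw [h1]
    nth_rewrite 1 [← hPa]
    rw [adjoint_inner_left]
    have : P (P z) = P z := by
      have := congrArg (fun A => A z) hP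
      simpa using this
    rw [this]
  have hcs : inner ℝ z (P z) ≤ ‖z‖ * ‖P z‖ := real_inner_le_norm z (P z)
  rcases eq_or_lt_of_le (norm_nonneg (P z)) with h | h
  · simp [← h]
  · have : ‖P z‖ ^ 2 ≤ ‖z‖ * ‖P z‖ := hsq ▸ hcs
    nlinarith

/-- Any Hyers--Ulam stability constant `K > 0` for `T` satisfies `K ≥ ‖T'‖`,
where `T'` is the Moore--Penrose inverse of `T`; consequently the infimum of all
Hyers--Ulam stability constants equals `‖T'‖`. -/
theorem stability_constant_ge_moorePenrose_norm
    {X Y : Type*} [NormedAddCommGroup X] [InnerProductSpace ℝ X] [CompleteSpace X]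
    [NormedAddCommGroup Y] [InnerProductSpace ℝ Y] [CompleteSpace Y]
    (T : X →L[ℝ] Y) (T' : Y →L[ℝ] X)
    (hclosed : IsClosed (LinearMap.range (T : X →ₗ[ℝ] Y) : Set Y))
    (h1 : T ∘L T' ∘L T = T) (h2 : T' ∘L T ∘L T' = T')
    (h3 : adjoint (T ∘L T') = T ∘L T') (h4 : adjoint (T' ∘L T) = T' ∘L T) :
    (∀ K : ℝ, 0 < K →
        (∀ x : X, ∃ x₀ ∈ LinearMap.ker (T : X →ₗ[ℝ] Y), ‖x - x₀‖ ≤ K * ‖T x‖) → ‖T'‖ ≤ K) ∧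
      sInf {K : ℝ | 0 < K ∧ ∀ x : X, ∃ x₀ ∈ LinearMap.ker (T : X →ₗ[ℝ] Y), ‖x - x₀‖ ≤ K * ‖T x‖}
        = ‖T'‖ := by
  -- T'∘T and T∘T' are idempotent
  have hPidem : (T' ∘L T) ∘L (T' ∘L T) = T' ∘L T := by
    ext z; simp only [comp_apply]
    have h := congrArg (fun A => A (T z)) h2
    simpa [comp_apply] using h
  have hQidem : (T ∘L T') ∘L (T ∘L T') = T ∘L T' := by
    ext z; simp only [comp_apply]
    have h := congrArg (fun A => A (T' z)) h1
    simpa [comp_apply] using h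
  have hPle : ∀ z : X, ‖(T' ∘L T) z‖ ≤ ‖z‖ := proj_norm_le _ hPidem h4
  have hQle : ∀ z : Y, ‖(T ∘L T') z‖ ≤ ‖z‖ := proj_norm_le _ hQidem h3
  -- Part 1
  have part1 : ∀ K : ℝ, 0 < K →
      (∀ x : X, ∃ x₀ ∈ LinearMap.ker (T : X →ₗ[ℝ] Y), ‖x - x₀‖ ≤ K * ‖T x‖) → ‖T'‖ ≤ K := by
    intro K hK hstab
    apply opNorm_le_bound _ hK.le
    intro y
    obtain ⟨x₀, hx₀, hle⟩ := hstab (T' y)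
    have hker : T x₀ = 0 := hx₀
    have key : T' y = (T' ∘L T) (T' y - x₀) := by
      simp only [comp_apply, map_sub, hker, map_zero, sub_zero]
      have h := congrArg (fun A => A y) h2
      simpa [comp_apply] using h.symm
    calc ‖T' y‖ = ‖(T' ∘L T) (T' y - x₀)‖ := by rw [← key]
      _ ≤ ‖T' y - x₀‖ := hPle _
      _ ≤ K * ‖T (T' y)‖ := hle
      _ ≤ K * ‖y‖ := by
          have := hQle y
          simp only [comp_apply] at this
          exact mul_le_mul_of_nonneg_left this hK.le
  refine ⟨part1, ?_⟩
  -- Part 2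
  set S := {K : ℝ | 0 < K ∧ ∀ x : X, ∃ x₀ ∈ LinearMap.ker (T : X →ₗ[ℝ] Y), ‖x - x₀‖ ≤ K * ‖T x‖} with hS
  have hmem : ∀ ε : ℝ, 0 < ε → (‖T'‖ + ε) ∈ S := by
    intro ε hε
    refine ⟨by positivity, fun x => ⟨x - (T' ∘L T) x, ?_, ?_⟩⟩
    · have h := congrArg (fun A => A x) h1
      simp only [comp_apply] at h
      simp [LinearMap.mem_ker, comp_apply, h]
    · have : x - (x - (T' ∘L T) x) = T' (T x) := by simp [comp_apply]
      rw [this]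
      calc ‖T' (T x)‖ ≤ ‖T'‖ * ‖T x‖ := le_opNorm _ _
        _ ≤ (‖T'‖ + ε) * ‖T x‖ := by nlinarith [norm_nonneg (T x)]
  have hbdd : ∀ K ∈ S, ‖T'‖ ≤ K := fun K hK => part1 K hK.1 hK.2
  have hne : S.Nonempty := ⟨‖T'‖ + 1, hmem 1 one_pos⟩
  apply le_antisymm
  · apply le_of_forall_pos_le_add
    intro ε hε
    exact csInf_le ⟨‖T'‖, hbdd⟩ (hmem ε hε)
  · exact le_csInf hne hbdd
end

section
/- Let X, Y be Hilbert spaces and T : X → Y a bounded linear operator. Then T has Hyers–Ulam stability (there exists K > 0 such that for every x ∈ X there is x₀ ∈ N(T) with ‖x − x₀‖ ≤ K‖Tx‖) if and only if the range of T is closed. -/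
open RealInnerProductSpace


set_option maxHeartbeats 1000000 in
/-- A bounded operator between Hilbert spaces has Hyers--Ulam stability if and
only if its range is closed. -/
theorem hyersUlam_iff_closed_range
    {X Y : Type*} [NormedAddCommGroup X] [InnerProductSpace ℝ X] [CompleteSpace X]
    [NormedAddCommGroup Y] [InnerProductSpace ℝ Y] [CompleteSpace Y]
    (T : X →L[ℝ] Y) :
    (∃ K : ℝ, 0 < K ∧ ∀ x : X, ∃ x₀ ∈ LinearMap.ker (T : X →ₗ[ℝ] Y), ‖x - x₀‖ ≤ K * ‖T x‖) ↔
      IsClosed ((LinearMap.range (T : X →ₗ[ℝ] Y) : Submodule ℝ Y) : Set Y) := by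
  set N : Submodule ℝ X := LinearMap.ker (T : X →ₗ[ℝ] Y) with hN
  have hNclosed : IsClosed (N : Set X) := ContinuousLinearMap.isClosed_ker T
  haveI : CompleteSpace N := hNclosed.completeSpace_coe
  set S : Nᗮ →L[ℝ] Y := T.comp Nᗮ.subtypeL with hS
  have hrange : Set.range S = ((LinearMap.range (T : X →ₗ[ℝ] Y) : Submodule ℝ Y) : Set Y) := by
    ext y
    constructor
    · rintro ⟨⟨v, hv⟩, rfl⟩
      exact ⟨v, rfl⟩
    · rintro ⟨x, rfl⟩
      obtain ⟨k, hk, v, hv, rfl⟩ := N.exists_add_mem_mem_orthogonal x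
      refine ⟨⟨v, hv⟩, ?_⟩
      simp only [hS, ContinuousLinearMap.comp_apply, Submodule.subtypeL_apply, map_add]
      have : T k = 0 := hk
      simp [this]
  constructor
  · rintro ⟨K, hK, hst⟩
    have hanti : AntilipschitzWith (Real.toNNReal K) S := by
      refine ContinuousLinearMap.antilipschitz_of_bound S fun v => ?_
      obtain ⟨x₀, hx₀, hle⟩ := hst v.1
      have hperp : ⟪(v : X), x₀⟫ = 0 :=
        Submodule.inner_left_of_mem_orthogonal hx₀ v.2
      have hsq : ‖(v : X) - x₀‖ ^ 2 = ‖(v : X)‖ ^ 2 - 2 * ⟪(v : X), x₀⟫ + ‖x₀‖ ^ 2 :=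
        norm_sub_sq_real _ _
      have h1 : ‖(v : X)‖ ≤ ‖(v : X) - x₀‖ := by
        nlinarith [norm_nonneg ((v : X) - x₀), norm_nonneg (v : X), norm_nonneg x₀]
      have hTv : S v = T v.1 := rfl
      calc ‖v‖ = ‖(v : X)‖ := rfl
        _ ≤ ‖(v : X) - x₀‖ := h1
        _ ≤ K * ‖T v.1‖ := hle
        _ ≤ Real.toNNReal K * ‖S v‖ := by
            rw [hTv]
            gcongr
            exact Real.le_coe_toNNReal K
    have := (hanti.isClosedEmbedding S.uniformContinuous).isClosed_range
    rwa [hrange] at this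
  · intro hR
    set R : Submodule ℝ Y := LinearMap.range (T : X →ₗ[ℝ] Y) with hRdef
    haveI : CompleteSpace R := hR.completeSpace_coe
    set S' : Nᗮ →L[ℝ] R := S.codRestrict R (fun v => ⟨v.1, rfl⟩) with hS'
    have hinj : LinearMap.ker (S' : Nᗮ →ₗ[ℝ] R) = ⊥ := by
      rw [LinearMap.ker_eq_bot']
      rintro ⟨v, hv⟩ h
      have hTv : T v = 0 := congrArg Subtype.val h
      have hvN : v ∈ N := hTv
      have : v = 0 := by
        have := Submodule.inner_left_of_mem_orthogonal hvN hv
        simpa [inner_self_eq_zero] using this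
      simpa using this
    have hsurj : LinearMap.range (S' : Nᗮ →ₗ[ℝ] R) = ⊤ := by
      rw [LinearMap.range_eq_top]
      rintro ⟨y, hy⟩
      obtain ⟨x, rfl⟩ := hy
      obtain ⟨k, hk, v, hv, rfl⟩ := N.exists_add_mem_mem_orthogonal x
      refine ⟨⟨v, hv⟩, ?_⟩
      apply Subtype.ext
      have hTk : T k = 0 := hk
      simp [hS', hS, ContinuousLinearMap.coe_codRestrict_apply, hTk]
    set e := ContinuousLinearEquiv.ofBijective S' hinj hsurj with he
    set C : ℝ := ‖(e.symm : R →L[ℝ] Nᗮ)‖ with hC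
    refine ⟨C + 1, by positivity, fun x => ?_⟩
    obtain ⟨k, hk, v, hv, rfl⟩ := N.exists_add_mem_mem_orthogonal x
    refine ⟨k, hk, ?_⟩
    have hTk : T k = 0 := hk
    have hSv : S' ⟨v, hv⟩ = ⟨T (k + v), ⟨k + v, rfl⟩⟩ := by
      apply Subtype.ext
      simp [hS', hS, hTk]
    have hback : e.symm ⟨T (k + v), ⟨k + v, rfl⟩⟩ = ⟨v, hv⟩ := by
      rw [← hSv]
      exact e.symm_apply_apply ⟨v, hv⟩
    have hbound : ‖(⟨v, hv⟩ : Nᗮ)‖ ≤ C * ‖T (k + v)‖ := by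
      calc ‖(⟨v, hv⟩ : Nᗮ)‖ = ‖e.symm ⟨T (k + v), ⟨k + v, rfl⟩⟩‖ := by rw [hback]
        _ ≤ C * ‖(⟨T (k + v), ⟨k + v, rfl⟩⟩ : R)‖ :=
            (e.symm : R →L[ℝ] Nᗮ).le_opNorm _
        _ = C * ‖T (k + v)‖ := rfl
    have hnv : ‖k + v - k‖ = ‖(⟨v, hv⟩ : Nᗮ)‖ := by simp
    rw [hnv]
    have : C * ‖T (k + v)‖ ≤ (C + 1) * ‖T (k + v)‖ := by
      have := norm_nonneg (T (k + v)); nlinarith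
    linarith
end

section
/- Let X be a Hilbert space, M a closed subspace of X, and P : X → X a bounded (not necessarily self-adjoint) idempotent with range M. Then I − (P − P*)² is invertible and the orthogonal projection Q onto M satisfies Q = P P* (I − (P − P*)²)⁻¹ = (I − (P − P*)²)⁻¹ P P*. -/
open ContinuousLinearMap
open scoped RealInnerProductSpace

/-- If `P` is a bounded idempotent on a Hilbert space with range the closed
subspace `M`, then `I - (P - P*)²` is invertible and the orthogonal projection `Q` onto `M`
(characterized as the self-adjoint idempotent with range `M`) satisfies
`Q = P P* (I - (P - P*)²)⁻¹ = (I - (P - P*)²)⁻¹ P P*`. -/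
theorem orthogonalProjection_eq_of_idempotent
    {X : Type*} [NormedAddCommGroup X] [InnerProductSpace ℝ X] [CompleteSpace X]
    (M : Submodule ℝ X) (hM : IsClosed (M : Set X))
    (P : X →L[ℝ] X) (hP : P * P = P) (hPM : LinearMap.range (P : X →ₗ[ℝ] X) = M) :
    IsUnit (1 - (P - adjoint P) ^ 2) ∧
      ∀ Q : X →L[ℝ] X, Q * Q = Q → adjoint Q = Q → LinearMap.range (Q : X →ₗ[ℝ] X) = M →
        Q = P * adjoint P * Ring.inverse (1 - (P - adjoint P) ^ 2) ∧
          Q = Ring.inverse (1 - (P - adjoint P) ^ 2) * (P * adjoint P) := by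
  simp only [← star_eq_adjoint]
  set P' : X →L[ℝ] X := star P with hP'def
  set T : X →L[ℝ] X := 1 - (P - P') ^ 2 with hTdef
  -- star of T
  have hNstar : star (P - P') = -(P - P') := by
    simp [hP'def, star_sub, sub_eq_add_neg, add_comm]
  have hTstar : star T = T := by
    rw [hTdef, star_sub, star_one, star_pow, hNstar, neg_sq]
  -- T is coercive, hence a unit
  have hinner : ∀ x : X, (inner ℝ (T x) x : ℝ) = ‖x‖ ^ 2 + ‖(P - P') x‖ ^ 2 := by
    intro x
    have h1 : T x = x - (P - P') ((P - P') x) := by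
      simp [hTdef, sq, mul_apply]
    have h2 : (inner ℝ ((P - P') ((P - P') x)) x : ℝ) = -‖(P - P') x‖ ^ 2 := by
      have := ContinuousLinearMap.adjoint_inner_left (P - P') ((P - P') x) x
      rw [← star_eq_adjoint, hNstar] at this
      simp only [neg_apply, inner_neg_left] at this
      rw [real_inner_comm, ← this, real_inner_self_eq_norm_sq]
    rw [h1, inner_sub_left, h2, real_inner_self_eq_norm_sq]
    ring
  have hT : IsUnit T := by
    apply isUnit_of_forall_le_norm_inner_map T (c := 1) one_pos
    intro x
    rw [hinner x]
    have h0 : (0:ℝ) ≤ ‖x‖ ^ 2 + ‖(P - P') x‖ ^ 2 := by positivity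
    rw [Real.norm_of_nonneg h0, NNReal.coe_one, mul_one]
    have : (0:ℝ) ≤ ‖(P - P') x‖ ^ 2 := by positivity
    linarith
  refine ⟨hT, fun Q hQ hQstar hQM => ?_⟩
  -- basic identities
  have hfix : ∀ (A : X →L[ℝ] X), A * A = A → ∀ x ∈ LinearMap.range (A : X →ₗ[ℝ] X), A x = x := by
    rintro A hA x ⟨y, rfl⟩
    rw [ContinuousLinearMap.coe_coe, ← ContinuousLinearMap.mul_apply, hA]
  have h1 : Q * P = P := by
    ext x
    exact hfix Q hQ (P x) (by rw [hQM, ← hPM]; exact LinearMap.mem_range_self _ x)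
  have h2 : P * Q = Q := by
    ext x
    exact hfix P hP (Q x) (by rw [hPM, ← hQM]; exact LinearMap.mem_range_self _ x)
  have h3 : Q * P' = Q := by
    calc Q * P' = star Q * star P := by rw [hQstar]
    _ = star (P * Q) := by rw [star_mul]
    _ = Q := by rw [h2, hQstar]
  -- the key identity Q * T = P * P'
  have key1 : Q * T = P * P' := by
    have expand : Q * T = Q - (Q * P) * P + (Q * P) * P' + (Q * P') * P - (Q * P') * P' := by
      rw [hTdef]; noncomm_ring
    rw [expand, h1, h3, hP, h1, h3]
    abel
  have key2 : T * Q = P * P' := by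
    have : star (Q * T) = star (P * P') := by rw [key1]
    rw [star_mul, star_mul, hQstar, hTstar, star_star] at this
    rw [this, hP'def]
  constructor
  · calc Q = Q * (T * Ring.inverse T) := by rw [Ring.mul_inverse_cancel T hT, mul_one]
    _ = (Q * T) * Ring.inverse T := by rw [mul_assoc]
    _ = P * P' * Ring.inverse T := by rw [key1]
  · calc Q = (Ring.inverse T * T) * Q := by rw [Ring.inverse_mul_cancel T hT, one_mul]
    _ = Ring.inverse T * (T * Q) := by rw [mul_assoc]
    _ = Ring.inverse T * (P * P') := by rw [key2]
end

section
/- Let X be a Hilbert space, M a closed subspace, and P ∈ B(X) an idempotent with range M. Then P P* (I − (P − P*)²) = (I − (P − P*)²) P P*. -/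
open ContinuousLinearMap

/-- If `P` is a bounded idempotent on a Hilbert space with range the closed
subspace `M`, then `P P* (I - (P - P*)²) = (I - (P - P*)²) P P*`. -/
theorem idempotent_commutation
    {X : Type*} [NormedAddCommGroup X] [InnerProductSpace ℝ X] [CompleteSpace X]
    (M : Submodule ℝ X) (hM : IsClosed (M : Set X))
    (P : X →L[ℝ] X) (hP : P * P = P) (hPM : LinearMap.range (P : X →ₗ[ℝ] X) = M) :
    P * adjoint P * (1 - (P - adjoint P) ^ 2)
      = (1 - (P - adjoint P) ^ 2) * (P * adjoint P) := by
  set Q := adjoint P with hQdef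
  have hQ : Q * Q = Q := by
    have := congrArg (fun A : X →L[ℝ] X => adjoint A) hP
    simpa [adjoint_comp, mul_def] using this
  have hP2 : ∀ x : X →L[ℝ] X, P * (P * x) = P * x := fun x => by rw [← mul_assoc, hP]
  have hQ2 : ∀ x : X →L[ℝ] X, Q * (Q * x) = Q * x := fun x => by rw [← mul_assoc, hQ]
  simp only [pow_two, mul_sub, sub_mul, mul_add, add_mul, mul_one, one_mul,
    mul_assoc, hP2, hQ2, hP, hQ]
  abel
end

section
/- Let X, Y be Banach spaces, T ∈ B(X,Y) with a bounded generalized inverse T⁺ ∈ B(Y,X) (i.e., TT⁺T = T and T⁺TT⁺ = T⁺). Let δT ∈ B(X,Y) with ‖δT‖‖T⁺‖ < 1. Then I + δT T⁺ is invertible in B(Y), and the operator B = T⁺(I + δT T⁺)⁻¹ satisfies B(T + δT)B = B, R(B) = R(T⁺), and N(B) = N(T⁺). -/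
open ContinuousLinearMap

/-- If `T⁺` is a bounded generalized inverse of `T` and `‖δT‖‖T⁺‖ < 1`, then
`I + δT T⁺` is invertible and `B = T⁺ (I + δT T⁺)⁻¹` satisfies `B (T + δT) B = B`,
`R(B) = R(T⁺)` and `N(B) = N(T⁺)`. -/
theorem generalized_inverse_perturbation
    {X Y : Type*} [NormedAddCommGroup X] [NormedSpace ℝ X] [CompleteSpace X]
    [NormedAddCommGroup Y] [NormedSpace ℝ Y] [CompleteSpace Y]
    (T : X →L[ℝ] Y) (T' : Y →L[ℝ] X) (δT : X →L[ℝ] Y)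
    (h1 : T ∘L T' ∘L T = T) (h2 : T' ∘L T ∘L T' = T')
    (hsmall : ‖δT‖ * ‖T'‖ < 1) :
    IsUnit (1 + δT ∘L T') ∧
      T' ∘L Ring.inverse (1 + δT ∘L T') ∘L (T + δT) ∘L
          (T' ∘L Ring.inverse (1 + δT ∘L T'))
        = T' ∘L Ring.inverse (1 + δT ∘L T') ∧
      LinearMap.range ((T' ∘L Ring.inverse (1 + δT ∘L T') : Y →L[ℝ] X) : Y →ₗ[ℝ] X) = LinearMap.range (T' : Y →ₗ[ℝ] X) ∧
      LinearMap.ker ((T' ∘L Ring.inverse (1 + δT ∘L T') : Y →L[ℝ] X) : Y →ₗ[ℝ] X) = LinearMap.ker (T' : Y →ₗ[ℝ] X) := by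
  have hnorm : ‖δT ∘L T'‖ < 1 := lt_of_le_of_lt (opNorm_comp_le _ _) hsmall
  have hu : IsUnit (1 + δT ∘L T') := by
    have hn : ‖-(δT ∘L T')‖ < 1 := by simpa using hnorm
    refine ⟨Units.oneSub (-(δT ∘L T')) hn, ?_⟩
    simp [Units.oneSub, sub_neg_eq_add]
  set C : Y →L[ℝ] Y := Ring.inverse (1 + δT ∘L T') with hC
  have hCA : C * (1 + δT ∘L T') = 1 := Ring.inverse_mul_cancel _ hu
  have hAC : (1 + δT ∘L T') * C = 1 := Ring.mul_inverse_cancel _ hu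
  have key1 : ∀ y, C y + δT (T' (C y)) = y := by
    intro y
    have := congrArg (fun f : Y →L[ℝ] Y => f y) hAC
    simpa [mul_apply, add_apply, comp_apply] using this
  have key2 : ∀ y, C (y + δT (T' y)) = y := by
    intro y
    have := congrArg (fun f : Y →L[ℝ] Y => f y) hCA
    simpa [mul_apply, add_apply, comp_apply] using this
  have hT' : ∀ y, T' (T (T' y)) = T' y := by
    intro y
    have := congrArg (fun f : Y →L[ℝ] X => f y) h2
    simpa [comp_apply] using this
  -- if T' y = 0 then C y = y
  have hfix : ∀ y, T' y = 0 → C y = y := by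
    intro y hy
    have := key2 y
    rw [hy] at this
    simpa using this
  refine ⟨hu, ?_, ?_, ?_⟩
  · ext x
    simp only [comp_apply, add_apply]
    set z := C x with hz
    have harg : T (T' z) + δT (T' z)
        = (T (T' z) - z) + (z + δT (T' z)) := by abel
    rw [harg, map_add, key2 z, map_add]
    have h0 : T' (T (T' z) - z) = 0 := by
      rw [map_sub, hT']; abel
    rw [hfix _ h0, map_sub, hT']
    abel
  · apply le_antisymm
    · rintro x ⟨y, rfl⟩
      exact ⟨C y, rfl⟩
    · rintro x ⟨y, rfl⟩
      refine ⟨y + δT (T' y), ?_⟩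
      simp [comp_apply, key2 y]
  · ext x
    simp only [LinearMap.mem_ker, ContinuousLinearMap.coe_coe, comp_apply]
    constructor
    · intro h
      have hx : C x + δT (T' (C x)) = x := key1 x
      rw [h] at hx
      simp only [map_zero, add_zero] at hx
      rw [← hx, h]
    · intro h
      rw [hfix _ h, h]
end

section
/- Let X, Y be Banach spaces, T ∈ B(X,Y) with bounded generalized inverse T⁺, and δT ∈ B(X,Y) with ‖δT‖‖T⁺‖ < 1 and N(T) ⊆ N(δT). Then N(T + δT) = N(T). -/
open ContinuousLinearMap

/-- If `T⁺` is a bounded generalized inverse of `T`, `‖δT‖‖T⁺‖ < 1` and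
`N(T) ⊆ N(δT)`, then `N(T + δT) = N(T)`. -/
theorem kernel_stability_under_perturbation
    {X Y : Type*} [NormedAddCommGroup X] [NormedSpace ℝ X] [CompleteSpace X]
    [NormedAddCommGroup Y] [NormedSpace ℝ Y] [CompleteSpace Y]
    (T : X →L[ℝ] Y) (T' : Y →L[ℝ] X) (δT : X →L[ℝ] Y)
    (h1 : T ∘L T' ∘L T = T) (h2 : T' ∘L T ∘L T' = T')
    (hsmall : ‖δT‖ * ‖T'‖ < 1)
    (hker : LinearMap.ker (T : X →ₗ[ℝ] Y) ≤ LinearMap.ker (δT : X →ₗ[ℝ] Y)) :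
    LinearMap.ker ((T + δT : X →L[ℝ] Y) : X →ₗ[ℝ] Y) = LinearMap.ker (T : X →ₗ[ℝ] Y) := by
  ext x
  simp only [LinearMap.mem_ker, ContinuousLinearMap.coe_coe, ContinuousLinearMap.add_apply]
  constructor
  · intro hx
    have hz : T (x - T' (T x)) = 0 := by
      have := congrArg (fun S => S x) h1
      simp only [ContinuousLinearMap.comp_apply] at this
      simp [map_sub, this]
    have hδz : δT (x - T' (T x)) = 0 := hker hz
    have hδ : δT x = δT (T' (T x)) := by
      rw [map_sub] at hδz
      exact sub_eq_zero.mp hδz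
    have hT : T x = -δT (T' (T x)) := by
      rw [← hδ]
      exact eq_neg_of_add_eq_zero_left hx
    have hnorm : ‖T x‖ ≤ ‖δT‖ * ‖T'‖ * ‖T x‖ := by
      calc ‖T x‖ = ‖δT (T' (T x))‖ := by nth_rewrite 1 [hT]; exact norm_neg _
        _ ≤ ‖δT‖ * ‖T' (T x)‖ := δT.le_opNorm _
        _ ≤ ‖δT‖ * (‖T'‖ * ‖T x‖) := by
            exact mul_le_mul_of_nonneg_left (T'.le_opNorm _) (norm_nonneg _)
        _ = ‖δT‖ * ‖T'‖ * ‖T x‖ := by ring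
    have hTx : T x = 0 := by
      by_contra h
      have hpos : 0 < ‖T x‖ := norm_pos_iff.mpr h
      nlinarith
    exact hTx
  · intro hx
    have : δT x = 0 := hker hx
    simp [hx, this]
end

section
/- Let X, Y be Banach spaces, T ∈ B(X,Y) with bounded generalized inverse T⁺, and δT ∈ B(X,Y) with ‖δT‖‖T⁺‖ < 1 and R(δT) ⊆ R(T). Then R(T + δT) = R(T). -/
open ContinuousLinearMap

/-- If `T⁺` is a bounded generalized inverse of `T`, `‖δT‖‖T⁺‖ < 1` and
`R(δT) ⊆ R(T)`, then `R(T + δT) = R(T)`. -/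
theorem range_stability_under_perturbation
    {X Y : Type*} [NormedAddCommGroup X] [NormedSpace ℝ X] [CompleteSpace X]
    [NormedAddCommGroup Y] [NormedSpace ℝ Y] [CompleteSpace Y]
    (T : X →L[ℝ] Y) (T' : Y →L[ℝ] X) (δT : X →L[ℝ] Y)
    (h1 : T ∘L T' ∘L T = T) (h2 : T' ∘L T ∘L T' = T')
    (hsmall : ‖δT‖ * ‖T'‖ < 1)
    (hran : LinearMap.range (δT : X →ₗ[ℝ] Y) ≤ LinearMap.range (T : X →ₗ[ℝ] Y)) :
    LinearMap.range ((T + δT : X →L[ℝ] Y) : X →ₗ[ℝ] Y) = LinearMap.range (T : X →ₗ[ℝ] Y) := by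
  -- δT = T ∘ T' ∘ δT since R(δT) ⊆ R(T)
  have hd : ∀ x, T (T' (δT x)) = δT x := by
    intro x
    obtain ⟨u, hu⟩ := hran ⟨x, rfl⟩
    have := congrArg (fun f : X →L[ℝ] Y => f u) h1
    simp only [ContinuousLinearMap.comp_apply] at this
    rw [ContinuousLinearMap.coe_coe, ContinuousLinearMap.coe_coe] at hu
    rw [← hu, this]
  -- the unit 1 + T'∘δT
  have hnorm : ‖-(T' ∘L δT)‖ < 1 := by
    rw [norm_neg]
    calc ‖T' ∘L δT‖ ≤ ‖T'‖ * ‖δT‖ := ContinuousLinearMap.opNorm_comp_le _ _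
    _ < 1 := by rwa [mul_comm]
  set u : (X →L[ℝ] X)ˣ := Units.oneSub (-(T' ∘L δT)) hnorm with hu
  have huval : (u : X →L[ℝ] X) = 1 + T' ∘L δT := by
    simp [hu, Units.oneSub, sub_neg_eq_add]
  have key : T + δT = T ∘L (u : X →L[ℝ] X) := by
    ext x
    simp [huval, hd x]
  have hsurj : Function.Surjective (u : X →L[ℝ] X) := by
    intro x
    refine ⟨(↑u⁻¹ : X →L[ℝ] X) x, ?_⟩
    have hx : (↑u * ↑u⁻¹ : X →L[ℝ] X) x = x := by rw [u.mul_inv]; rfl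
    rwa [ContinuousLinearMap.mul_apply] at hx
  rw [key]
  apply le_antisymm
  · rintro y ⟨x, rfl⟩
    exact ⟨(u : X →L[ℝ] X) x, rfl⟩
  · rintro y ⟨x, rfl⟩
    obtain ⟨z, hz⟩ := hsurj x
    exact ⟨z, by simp [hz]⟩
end

section
/- Let X, Y be Banach spaces, T ∈ B(X,Y) with bounded generalized inverse T⁺, and δT ∈ B(X,Y) with ‖δT‖‖T⁺‖ < 1 and R(δT) ⊆ R(T). Then (T + δT) T⁺ (I + δT T⁺)⁻¹ = T T⁺. -/
open ContinuousLinearMap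

/-- If `T⁺` is a bounded generalized inverse of `T`, `‖δT‖‖T⁺‖ < 1` and
`R(δT) ⊆ R(T)`, then `(T + δT) T⁺ (I + δT T⁺)⁻¹ = T T⁺`. -/
theorem perturbed_range_projection
    {X Y : Type*} [NormedAddCommGroup X] [NormedSpace ℝ X] [CompleteSpace X]
    [NormedAddCommGroup Y] [NormedSpace ℝ Y] [CompleteSpace Y]
    (T : X →L[ℝ] Y) (T' : Y →L[ℝ] X) (δT : X →L[ℝ] Y)
    (h1 : T ∘L T' ∘L T = T) (h2 : T' ∘L T ∘L T' = T')
    (hsmall : ‖δT‖ * ‖T'‖ < 1)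
    (hran : LinearMap.range (δT : X →ₗ[ℝ] Y) ≤ LinearMap.range (T : X →ₗ[ℝ] Y)) :
    (T + δT) ∘L T' ∘L Ring.inverse (1 + δT ∘L T') = T ∘L T' := by
  -- `T T' δT = δT` since range δT ⊆ range T
  have hTTδ : T ∘L T' ∘L δT = δT := by
    ext x
    obtain ⟨z, hz⟩ := hran (LinearMap.mem_range_self δT.toLinearMap x)
    have hz' : T z = δT x := hz
    have h1z : T (T' (T z)) = T z := by
      have := congrArg (fun f => f z) h1
      simpa using this
    simp only [coe_comp', Function.comp_apply]
    rw [← hz', h1z]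
  -- `1 + δT T'` is a unit
  have hu : IsUnit (1 + δT ∘L T') := by
    have hn : ‖-(δT ∘L T')‖ < 1 := by
      rw [norm_neg]
      exact lt_of_le_of_lt (opNorm_comp_le _ _) hsmall
    have := (Units.oneSub (-(δT ∘L T')) hn).isUnit
    simpa using this
  have key : (T + δT) ∘L T' = (T ∘L T') * (1 + δT ∘L T') := by
    have : (T ∘L T') * (1 + δT ∘L T') = T ∘L T' + (T ∘L T' ∘L δT) ∘L T' := by
      simp [mul_one_add, mul_def, comp_assoc]
    rw [this, hTTδ, add_comp]
  calc (T + δT) ∘L T' ∘L Ring.inverse (1 + δT ∘L T')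
      = ((T + δT) ∘L T') * Ring.inverse (1 + δT ∘L T') := by
        rw [mul_def, comp_assoc]
    _ = (T ∘L T') * ((1 + δT ∘L T') * Ring.inverse (1 + δT ∘L T')) := by
        rw [key, mul_assoc]
    _ = T ∘L T' := by rw [Ring.mul_inverse_cancel _ hu, mul_one]
end

section
/- Let X, Y be Hilbert spaces, and let T, T̄ ∈ B(X,Y) both have closed range with Moore–Penrose inverses T†, T̄†. Then T̄† − T† = T̄†(T̄†)*(T̄ − T)*(I − TT†) + T̄†(T − T̄)T† + (T̄†T̄ − I)(T − T̄)*(T†)*T†, and consequently ‖T̄† − T†‖ ≤ (‖T̄†‖² + ‖T̄†‖‖T†‖ + ‖T†‖²)·‖T̄ − T‖. -/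
open ContinuousLinearMap

lemma proj_norm_le_one' {Z : Type*} [NormedAddCommGroup Z] [InnerProductSpace ℝ Z]
    [CompleteSpace Z] (P : Z →L[ℝ] Z) (h1 : adjoint P = P) (h2 : P ∘L P = P) :
    ‖P‖ ≤ 1 := by
  refine opNorm_le_bound _ zero_le_one fun x => ?_
  rw [one_mul]
  have key : ‖P x‖ ^ 2 ≤ ‖x‖ * ‖P x‖ := by
    have h3 : (inner ℝ (P x) (P x) : ℝ) = inner ℝ x (P (P x)) := by
      rw [← adjoint_inner_right, h1]
    have h4 : P (P x) = P x := by
      have := DFunLike.congr_fun h2 x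
      simpa using this
    rw [h4] at h3
    have h5 : (inner ℝ (P x) (P x) : ℝ) = ‖P x‖ ^ 2 := real_inner_self_eq_norm_sq _
    have h6 : (inner ℝ x (P x) : ℝ) ≤ ‖x‖ * ‖P x‖ := real_inner_le_norm x (P x)
    linarith
  rcases eq_or_lt_of_le (norm_nonneg (P x)) with h | h
  · rw [← h]; exact norm_nonneg x
  · nlinarith

set_option maxHeartbeats 1600000 in
/-- For operators `T`, `S` (`S = T̄`) between Hilbert spaces with closed ranges
and Moore--Penrose inverses `T'`, `S'`, one has
`S' - T' = S'(S')*(S - T)*(I - T T') + S'(T - S)T' + (S' S - I)(T - S)*(T')* T'`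
and hence `‖S' - T'‖ ≤ (‖S'‖² + ‖S'‖‖T'‖ + ‖T'‖²) ‖S - T‖`. -/
theorem moorePenrose_difference_formula
    {X Y : Type*} [NormedAddCommGroup X] [InnerProductSpace ℝ X] [CompleteSpace X]
    [NormedAddCommGroup Y] [InnerProductSpace ℝ Y] [CompleteSpace Y]
    (T S : X →L[ℝ] Y) (T' S' : Y →L[ℝ] X)
    (hTclosed : IsClosed (LinearMap.range (T : X →ₗ[ℝ] Y) : Set Y))
    (hSclosed : IsClosed (LinearMap.range (S : X →ₗ[ℝ] Y) : Set Y))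
    (hT1 : T ∘L T' ∘L T = T) (hT2 : T' ∘L T ∘L T' = T')
    (hT3 : adjoint (T ∘L T') = T ∘L T') (hT4 : adjoint (T' ∘L T) = T' ∘L T)
    (hS1 : S ∘L S' ∘L S = S) (hS2 : S' ∘L S ∘L S' = S')
    (hS3 : adjoint (S ∘L S') = S ∘L S') (hS4 : adjoint (S' ∘L S) = S' ∘L S) :
    S' - T'
        = S' ∘L adjoint S' ∘L adjoint (S - T) ∘L (1 - T ∘L T')
          + S' ∘L (T - S) ∘L T'
          + (S' ∘L S - 1) ∘L adjoint (T - S) ∘L adjoint T' ∘L T' ∧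
      ‖S' - T'‖ ≤ (‖S'‖ ^ 2 + ‖S'‖ * ‖T'‖ + ‖T'‖ ^ 2) * ‖S - T‖ := by
  -- Key algebraic facts
  have factA : adjoint T ∘L (1 - T ∘L T') = 0 := by
    have h : adjoint T ∘L (T ∘L T') = adjoint T := by
      rw [← hT3, ← adjoint_comp]
      exact congrArg adjoint hT1
    rw [comp_sub, h, one_def, comp_id, sub_self]
  have factB : S' ∘L (adjoint S' ∘L adjoint S) = S' := by
    rw [← adjoint_comp, hS3]
    exact hS2
  have factC : adjoint T ∘L (adjoint T' ∘L T') = T' := by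
    rw [← comp_assoc, ← adjoint_comp, hT4]
    exact hT2
  have factD : (S' ∘L S - 1) ∘L adjoint S = 0 := by
    have h : (S' ∘L S) ∘L adjoint S = adjoint S := by
      rw [← hS4, ← adjoint_comp]
      exact congrArg adjoint hS1
    rw [sub_comp, h, one_def, id_comp, sub_self]
  -- The identity
  have hid : S' - T'
      = S' ∘L adjoint S' ∘L adjoint (S - T) ∘L (1 - T ∘L T')
        + S' ∘L (T - S) ∘L T'
        + (S' ∘L S - 1) ∘L adjoint (T - S) ∘L adjoint T' ∘L T' := by
    have e1 : S' ∘L adjoint S' ∘L adjoint (S - T) ∘L (1 - T ∘L T')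
        = S' - S' ∘L (T ∘L T') := by
      rw [map_sub]
      calc S' ∘L adjoint S' ∘L (adjoint S - adjoint T) ∘L (1 - T ∘L T')
          = S' ∘L (adjoint S' ∘L ((adjoint S - adjoint T) ∘L (1 - T ∘L T'))) := rfl
        _ = S' ∘L (adjoint S' ∘L (adjoint S ∘L (1 - T ∘L T'))) := by
            rw [sub_comp, factA, sub_zero]
        _ = (S' ∘L (adjoint S' ∘L adjoint S)) ∘L (1 - T ∘L T') := rfl
        _ = S' ∘L (1 - T ∘L T') := by rw [factB]
        _ = S' - S' ∘L (T ∘L T') := by rw [comp_sub, one_def, comp_id]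
    have e2 : S' ∘L (T - S) ∘L T' = S' ∘L (T ∘L T') - S' ∘L (S ∘L T') := by
      rw [sub_comp, comp_sub]
    have e3 : (S' ∘L S - 1) ∘L adjoint (T - S) ∘L adjoint T' ∘L T'
        = S' ∘L (S ∘L T') - T' := by
      rw [map_sub]
      calc (S' ∘L S - 1) ∘L (adjoint T - adjoint S) ∘L (adjoint T' ∘L T')
          = ((S' ∘L S - 1) ∘L (adjoint T - adjoint S)) ∘L (adjoint T' ∘L T') := rfl
        _ = ((S' ∘L S - 1) ∘L adjoint T - (S' ∘L S - 1) ∘L adjoint S)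
              ∘L (adjoint T' ∘L T') := by rw [comp_sub]
        _ = ((S' ∘L S - 1) ∘L adjoint T) ∘L (adjoint T' ∘L T') := by
            rw [factD, sub_zero]
        _ = (S' ∘L S - 1) ∘L (adjoint T ∘L (adjoint T' ∘L T')) := rfl
        _ = (S' ∘L S - 1) ∘L T' := by rw [factC]
        _ = S' ∘L (S ∘L T') - T' := by rw [sub_comp, one_def, id_comp, comp_assoc]
    rw [e1, e2, e3]
    abel
  refine ⟨hid, ?_⟩
  -- Norm bound
  have hP : ‖(1 : Y →L[ℝ] Y) - T ∘L T'‖ ≤ 1 := by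
    apply proj_norm_le_one'
    · rw [map_sub, hT3]
      simp [one_def, ContinuousLinearMap.adjoint_id]
    · have h : (T ∘L T') ∘L (T ∘L T') = T ∘L T' := congrArg (fun f => T ∘L f) hT2
      rw [sub_comp, comp_sub, comp_sub, h]
      simp only [one_def, comp_id, id_comp]
      abel
  have hQ : ‖S' ∘L S - (1 : X →L[ℝ] X)‖ ≤ 1 := by
    rw [show S' ∘L S - (1 : X →L[ℝ] X) = -((1 : X →L[ℝ] X) - S' ∘L S) by abel, norm_neg]
    apply proj_norm_le_one'
    · rw [map_sub, hS4]
      simp [one_def, ContinuousLinearMap.adjoint_id]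
    · have h : (S' ∘L S) ∘L (S' ∘L S) = S' ∘L S := congrArg (fun f => f ∘L S) hS2
      rw [sub_comp, comp_sub, comp_sub, h]
      simp only [one_def, comp_id, id_comp]
      abel
  have hadjS' : ‖adjoint S'‖ = ‖S'‖ :=
    (ContinuousLinearMap.adjoint : (Y →L[ℝ] X) ≃ₗᵢ⋆[ℝ] (X →L[ℝ] Y)).norm_map S'
  have hadjST : ‖adjoint (S - T)‖ = ‖S - T‖ :=
    (ContinuousLinearMap.adjoint : (X →L[ℝ] Y) ≃ₗᵢ⋆[ℝ] (Y →L[ℝ] X)).norm_map (S - T)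
  have hadjTS : ‖adjoint (T - S)‖ = ‖S - T‖ := by
    rw [show T - S = -(S - T) by abel, map_neg, norm_neg, hadjST]
  have hadjT' : ‖adjoint T'‖ = ‖T'‖ :=
    (ContinuousLinearMap.adjoint : (Y →L[ℝ] X) ≃ₗᵢ⋆[ℝ] (X →L[ℝ] Y)).norm_map T'
  have hTS : ‖T - S‖ = ‖S - T‖ := by rw [show T - S = -(S - T) by abel, norm_neg]
  have b1 : ‖S' ∘L adjoint S' ∘L adjoint (S - T) ∘L (1 - T ∘L T')‖
      ≤ ‖S'‖ ^ 2 * ‖S - T‖ := by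
    calc ‖S' ∘L adjoint S' ∘L adjoint (S - T) ∘L (1 - T ∘L T')‖
        ≤ ‖S'‖ * ‖adjoint S' ∘L adjoint (S - T) ∘L (1 - T ∘L T')‖ := opNorm_comp_le _ _
      _ ≤ ‖S'‖ * (‖adjoint S'‖ * ‖adjoint (S - T) ∘L (1 - T ∘L T')‖) := by
          gcongr; exact opNorm_comp_le _ _
      _ ≤ ‖S'‖ * (‖adjoint S'‖ * (‖adjoint (S - T)‖ * ‖(1 : Y →L[ℝ] Y) - T ∘L T'‖)) := by
          gcongr; exact opNorm_comp_le _ _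
      _ ≤ ‖S'‖ * (‖S'‖ * (‖S - T‖ * 1)) := by
          rw [hadjS', hadjST]; gcongr
      _ = ‖S'‖ ^ 2 * ‖S - T‖ := by ring
  have b2 : ‖S' ∘L (T - S) ∘L T'‖ ≤ ‖S'‖ * ‖T'‖ * ‖S - T‖ := by
    calc ‖S' ∘L (T - S) ∘L T'‖ ≤ ‖S'‖ * ‖(T - S) ∘L T'‖ := opNorm_comp_le _ _
      _ ≤ ‖S'‖ * (‖T - S‖ * ‖T'‖) := by gcongr; exact opNorm_comp_le _ _
      _ = ‖S'‖ * ‖T'‖ * ‖S - T‖ := by rw [hTS]; ring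
  have b3 : ‖(S' ∘L S - 1) ∘L adjoint (T - S) ∘L adjoint T' ∘L T'‖
      ≤ ‖T'‖ ^ 2 * ‖S - T‖ := by
    calc ‖(S' ∘L S - 1) ∘L adjoint (T - S) ∘L adjoint T' ∘L T'‖
        ≤ ‖S' ∘L S - (1 : X →L[ℝ] X)‖ * ‖adjoint (T - S) ∘L adjoint T' ∘L T'‖ :=
          opNorm_comp_le _ _
      _ ≤ ‖S' ∘L S - (1 : X →L[ℝ] X)‖ * (‖adjoint (T - S)‖ * ‖adjoint T' ∘L T'‖) := by
          gcongr; exact opNorm_comp_le _ _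
      _ ≤ ‖S' ∘L S - (1 : X →L[ℝ] X)‖ * (‖adjoint (T - S)‖ * (‖adjoint T'‖ * ‖T'‖)) := by
          gcongr; exact opNorm_comp_le _ _
      _ ≤ 1 * (‖S - T‖ * (‖T'‖ * ‖T'‖)) := by
          rw [hadjTS, hadjT']; gcongr
      _ = ‖T'‖ ^ 2 * ‖S - T‖ := by ring
  calc ‖S' - T'‖ = ‖S' ∘L adjoint S' ∘L adjoint (S - T) ∘L (1 - T ∘L T')
          + S' ∘L (T - S) ∘L T'
          + (S' ∘L S - 1) ∘L adjoint (T - S) ∘L adjoint T' ∘L T'‖ := by rw [hid]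
    _ ≤ ‖S' ∘L adjoint S' ∘L adjoint (S - T) ∘L (1 - T ∘L T')
          + S' ∘L (T - S) ∘L T'‖
        + ‖(S' ∘L S - 1) ∘L adjoint (T - S) ∘L adjoint T' ∘L T'‖ := norm_add_le _ _
    _ ≤ ‖S' ∘L adjoint S' ∘L adjoint (S - T) ∘L (1 - T ∘L T')‖
        + ‖S' ∘L (T - S) ∘L T'‖
        + ‖(S' ∘L S - 1) ∘L adjoint (T - S) ∘L adjoint T' ∘L T'‖ := by
          gcongr; exact norm_add_le _ _
    _ ≤ ‖S'‖ ^ 2 * ‖S - T‖ + ‖S'‖ * ‖T'‖ * ‖S - T‖ + ‖T'‖ ^ 2 * ‖S - T‖ := by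
          gcongr
    _ = (‖S'‖ ^ 2 + ‖S'‖ * ‖T'‖ + ‖T'‖ ^ 2) * ‖S - T‖ := by ring
end

section
/- Let X, Y be Hilbert spaces and T ∈ B(X,Y) with closed range and Moore–Penrose inverse T†. Suppose δT ∈ B(X,Y) with ‖δT‖‖T†‖ < 1 and R(T + δT) ∩ N(T†) = {0}. Then for any x ∈ X, if T(I + T†δT)x = 0 then (T + δT)x = 0; i.e., (I + T†δT)⁻¹ N(T) ⊆ N(T + δT). -/
open ContinuousLinearMap

/-- If `‖δT‖‖T†‖ < 1` and `R(T + δT) ∩ N(T†) = {0}`, then for any `x`,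
`T (I + T† δT) x = 0` implies `(T + δT) x = 0`; i.e. `(I + T†δT)⁻¹ N(T) ⊆ N(T + δT)`. -/
theorem preimage_kernel_subset_perturbed_kernel
    {X Y : Type*} [NormedAddCommGroup X] [InnerProductSpace ℝ X] [CompleteSpace X]
    [NormedAddCommGroup Y] [InnerProductSpace ℝ Y] [CompleteSpace Y]
    (T : X →L[ℝ] Y) (T' : Y →L[ℝ] X) (δT : X →L[ℝ] Y)
    (hclosed : IsClosed (LinearMap.range (T : X →ₗ[ℝ] Y) : Set Y))
    (h1 : T ∘L T' ∘L T = T) (h2 : T' ∘L T ∘L T' = T')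
    (h3 : adjoint (T ∘L T') = T ∘L T') (h4 : adjoint (T' ∘L T) = T' ∘L T)
    (hsmall : ‖δT‖ * ‖T'‖ < 1)
    (hdisj : LinearMap.range ((T + δT : X →L[ℝ] Y) : X →ₗ[ℝ] Y) ⊓ LinearMap.ker (T' : Y →ₗ[ℝ] X) = ⊥) :
    ∀ x : X, T ((1 + T' ∘L δT) x) = 0 → (T + δT) x = 0 := by
  intro x hx
  have hTx : T x + T (T' (δT x)) = 0 := by
    simpa [add_apply, comp_apply, map_add, one_def] using hx
  have hker : T' ((T + δT) x) = 0 := by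
    have h2' : T' (T (T' (δT x))) = T' (δT x) := by
      have := congrArg (fun f => f (δT x)) h2
      simpa [comp_apply] using this
    have : T' (T x) = - T' (δT x) := by
      have := congrArg T' hTx
      simp only [map_add, map_neg, map_zero] at this
      rw [h2'] at this
      exact eq_neg_of_add_eq_zero_left this
    simp only [add_apply, map_add, this]
    simp
  have hmem : (T + δT) x ∈ LinearMap.range ((T + δT : X →L[ℝ] Y) : X →ₗ[ℝ] Y) ⊓ LinearMap.ker (T' : Y →ₗ[ℝ] X) :=
    ⟨⟨x, rfl⟩, hker⟩
  rw [hdisj, Submodule.mem_bot] at hmem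
  exact hmem
end

section
/- Let X, Y be Hilbert spaces, T ∈ B(X,Y) a finite rank operator with Moore–Penrose inverse T†, and δT ∈ B(X,Y) with ‖δT‖‖T†‖ < 1 and rank(T + δT) = rank(T). Then R(T + δT) ∩ N(T†) = {0}. -/
open ContinuousLinearMap

/-- If `T` has finite rank with Moore--Penrose inverse `T†`, `‖δT‖‖T†‖ < 1`
and `rank (T + δT) = rank T`, then `R(T + δT) ∩ N(T†) = {0}`. -/
theorem finite_rank_perturbation_disjoint
    {X Y : Type*} [NormedAddCommGroup X] [InnerProductSpace ℝ X] [CompleteSpace X]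
    [NormedAddCommGroup Y] [InnerProductSpace ℝ Y] [CompleteSpace Y]
    (T : X →L[ℝ] Y) (T' : Y →L[ℝ] X) (δT : X →L[ℝ] Y)
    [FiniteDimensional ℝ (LinearMap.range (T : X →ₗ[ℝ] Y))]
    [FiniteDimensional ℝ (LinearMap.range ((T + δT : X →L[ℝ] Y) : X →ₗ[ℝ] Y))]
    (h1 : T ∘L T' ∘L T = T) (h2 : T' ∘L T ∘L T' = T')
    (h3 : adjoint (T ∘L T') = T ∘L T') (h4 : adjoint (T' ∘L T) = T' ∘L T)
    (hsmall : ‖δT‖ * ‖T'‖ < 1)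
    (hrank : Module.finrank ℝ (LinearMap.range ((T + δT : X →L[ℝ] Y) : X →ₗ[ℝ] Y))
      = Module.finrank ℝ (LinearMap.range (T : X →ₗ[ℝ] Y))) :
    LinearMap.range ((T + δT : X →L[ℝ] Y) : X →ₗ[ℝ] Y) ⊓ LinearMap.ker (T' : Y →ₗ[ℝ] X) = ⊥ := by
  set S : X →L[ℝ] Y := T + δT with hS
  set K : Submodule ℝ X := LinearMap.range (T' : Y →ₗ[ℝ] X) with hK
  -- K = T'(range T)
  have hKmap : K = Submodule.map (T' : Y →ₗ[ℝ] X) (LinearMap.range (T : X →ₗ[ℝ] Y)) := by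
    apply le_antisymm
    · rintro _ ⟨y, rfl⟩
      exact ⟨T (T' y), ⟨T' y, rfl⟩, DFunLike.congr_fun h2 y⟩
    · rintro _ ⟨_, ⟨x, rfl⟩, rfl⟩
      exact ⟨T x, rfl⟩
  have hKfin : FiniteDimensional ℝ K := by
    rw [hKmap]; infer_instance
  -- key injectivity: u ∈ K, T'(S u) = 0 → u = 0
  have hkey : ∀ u ∈ K, T' (S u) = 0 → u = 0 := by
    rintro _ ⟨y, rfl⟩ h0
    set u := T' y with hu
    have hTTu : T' (T u) = u := DFunLike.congr_fun h2 y
    have heq : u = - T' (δT u) := by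
      have : T' (T u) + T' (δT u) = 0 := by
        have : T' (T u + δT u) = 0 := h0
        rwa [map_add] at this
      rw [hTTu] at this
      exact eq_neg_of_add_eq_zero_left this
    have hle : ‖u‖ ≤ ‖δT‖ * ‖T'‖ * ‖u‖ := by
      calc ‖u‖ = ‖T' (δT u)‖ := by nth_rewrite 1 [heq]; rw [norm_neg]
        _ ≤ ‖T'‖ * ‖δT u‖ := le_opNorm _ _
        _ ≤ ‖T'‖ * (‖δT‖ * ‖u‖) :=
            mul_le_mul_of_nonneg_left (le_opNorm _ _) (norm_nonneg _)
        _ = ‖δT‖ * ‖T'‖ * ‖u‖ := by ring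
    have hnn : (0:ℝ) ≤ ‖u‖ := norm_nonneg _
    have : ‖u‖ ≤ 0 := by nlinarith
    exact norm_le_zero_iff.mp this
  -- S injective on K
  have hinj : Function.Injective ((S : X →ₗ[ℝ] Y).domRestrict K) := by
    rw [← LinearMap.ker_eq_bot, LinearMap.ker_eq_bot']
    rintro ⟨u, hu⟩ h0
    have hSu : S u = 0 := h0
    have : u = 0 := hkey u hu (by rw [hSu, map_zero])
    exact Subtype.ext this
  -- dim K = rank T
  have hrangeT : LinearMap.range (T : X →ₗ[ℝ] Y) = Submodule.map (T : X →ₗ[ℝ] Y) K := by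
    apply le_antisymm
    · rintro _ ⟨x, rfl⟩
      exact ⟨T' (T x), ⟨T x, rfl⟩, DFunLike.congr_fun h1 x⟩
    · rintro _ ⟨_, ⟨y, rfl⟩, rfl⟩
      exact ⟨T' y, rfl⟩
  have hdimK : Module.finrank ℝ K = Module.finrank ℝ (LinearMap.range (T : X →ₗ[ℝ] Y)) := by
    apply le_antisymm
    · calc Module.finrank ℝ K
          = Module.finrank ℝ (Submodule.map (T' : Y →ₗ[ℝ] X) (LinearMap.range (T : X →ₗ[ℝ] Y))) := by
            rw [hKmap]
        _ ≤ Module.finrank ℝ (LinearMap.range (T : X →ₗ[ℝ] Y)) := Submodule.finrank_map_le _ _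
    · calc Module.finrank ℝ (LinearMap.range (T : X →ₗ[ℝ] Y))
          = Module.finrank ℝ (Submodule.map (T : X →ₗ[ℝ] Y) K) := by rw [hrangeT]
        _ ≤ Module.finrank ℝ K := Submodule.finrank_map_le _ _
  -- S(K) = range S
  have hmapS : Submodule.map (S : X →ₗ[ℝ] Y) K = LinearMap.range (S : X →ₗ[ℝ] Y) := by
    have hle : Submodule.map (S : X →ₗ[ℝ] Y) K ≤ LinearMap.range (S : X →ₗ[ℝ] Y) := by
      rintro _ ⟨u, _, rfl⟩; exact ⟨u, rfl⟩
    have hdim : Module.finrank ℝ (Submodule.map (S : X →ₗ[ℝ] Y) K)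
        = Module.finrank ℝ (LinearMap.range (S : X →ₗ[ℝ] Y)) := by
      rw [← LinearMap.range_domRestrict]
      rw [LinearMap.finrank_range_of_inj hinj]
      rw [hdimK, ← hrank]
    exact Submodule.eq_of_le_of_finrank_eq hle hdim
  -- conclude
  rw [Submodule.eq_bot_iff]
  rintro y ⟨hy1, hy2⟩
  rw [← hmapS] at hy1
  obtain ⟨u, huK, rfl⟩ := hy1
  have : u = 0 := hkey u huK hy2
  rw [this, map_zero]
end

section
/- Let X, Y be Hilbert spaces, T ∈ B(X,Y) with closed range and Moore–Penrose inverse T†, and δT ∈ B(X,Y) with ‖δT‖‖T†‖ < 1. If dim N(T + δT) = dim N(T) < ∞, then R(T + δT) ∩ N(T†) = {0}. -/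
open ContinuousLinearMap

/-- If `T` has closed range with Moore--Penrose inverse `T†`, `‖δT‖‖T†‖ < 1`
and `dim N(T + δT) = dim N(T) < ∞`, then `R(T + δT) ∩ N(T†) = {0}`. -/
theorem equal_nullity_perturbation_disjoint
    {X Y : Type*} [NormedAddCommGroup X] [InnerProductSpace ℝ X] [CompleteSpace X]
    [NormedAddCommGroup Y] [InnerProductSpace ℝ Y] [CompleteSpace Y]
    (T : X →L[ℝ] Y) (T' : Y →L[ℝ] X) (δT : X →L[ℝ] Y)
    (hclosed : IsClosed (LinearMap.range (T : X →ₗ[ℝ] Y) : Set Y))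
    [FiniteDimensional ℝ (LinearMap.ker (T : X →ₗ[ℝ] Y))]
    [FiniteDimensional ℝ (LinearMap.ker ((T + δT : X →L[ℝ] Y) : X →ₗ[ℝ] Y))]
    (h1 : T ∘L T' ∘L T = T) (h2 : T' ∘L T ∘L T' = T')
    (h3 : adjoint (T ∘L T') = T ∘L T') (h4 : adjoint (T' ∘L T) = T' ∘L T)
    (hsmall : ‖δT‖ * ‖T'‖ < 1)
    (hnull : Module.finrank ℝ (LinearMap.ker ((T + δT : X →L[ℝ] Y) : X →ₗ[ℝ] Y))
      = Module.finrank ℝ (LinearMap.ker (T : X →ₗ[ℝ] Y))) :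
    LinearMap.range ((T + δT : X →L[ℝ] Y) : X →ₗ[ℝ] Y) ⊓ LinearMap.ker (T' : Y →ₗ[ℝ] X) = ⊥ := by
  set C : X →L[ℝ] X := T' ∘L δT with hCdef
  have hC : ‖C‖ < 1 := lt_of_le_of_lt (opNorm_comp_le _ _) (by rwa [mul_comm] at hsmall)
  set B : X →L[ℝ] X := 1 + C with hBdef
  have hB : ∀ x : X, B x = x + C x := fun x => by simp [hBdef]
  -- pointwise facts from h1, h2
  have h1' : ∀ z : X, T (T' (T z)) = T z := fun z => by
    have := ContinuousLinearMap.ext_iff.mp h1 z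
    simpa using this
  have h2' : ∀ z : Y, T' (T (T' z)) = T' z := fun z => by
    have := ContinuousLinearMap.ext_iff.mp h2 z
    simpa using this
  -- B is injective
  have hBinj : ∀ x : X, B x = 0 → x = 0 := by
    intro x hx
    by_contra hne
    have hxpos : 0 < ‖x‖ := norm_pos_iff.mpr hne
    have hxe : x = -(C x) := by
      have : x + C x = 0 := by rw [← hB]; exact hx
      exact eq_neg_of_add_eq_zero_left this
    have hnorm : ‖x‖ = ‖C x‖ := by nth_rewrite 1 [hxe]; rw [norm_neg]
    have hle : ‖C x‖ ≤ ‖C‖ * ‖x‖ := C.le_opNorm x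
    nlinarith
  -- B maps ker (T + δT) into ker T
  have hker : ∀ x : X, x ∈ LinearMap.ker ((T + δT : X →L[ℝ] Y) : X →ₗ[ℝ] Y) → B x ∈ LinearMap.ker (T : X →ₗ[ℝ] Y) := by
    intro x hx
    have hx' : T x + δT x = 0 := by simpa using hx
    have hδ : δT x = -(T x) := eq_neg_of_add_eq_zero_right hx'
    have hTB : T (B x) = 0 := by
      have e : T (B x) = T x + T (T' (δT x)) := by
        rw [hB]; simp [hCdef, map_add]
      rw [e, hδ, map_neg, map_neg, h1' x, add_neg_cancel]
    simpa [LinearMap.mem_ker] using hTB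
  -- the induced map between kernels
  let f : (LinearMap.ker ((T + δT : X →L[ℝ] Y) : X →ₗ[ℝ] Y)) →ₗ[ℝ] (LinearMap.ker (T : X →ₗ[ℝ] Y)) :=
    ((B : X →ₗ[ℝ] X).comp (LinearMap.ker ((T + δT : X →L[ℝ] Y) : X →ₗ[ℝ] Y)).subtype).codRestrict
      (LinearMap.ker (T : X →ₗ[ℝ] Y)) (fun x => hker x.1 x.2)
  have hfapp : ∀ x : LinearMap.ker ((T + δT : X →L[ℝ] Y) : X →ₗ[ℝ] Y), (f x : X) = B x.1 := fun x => rfl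
  have hfinj : Function.Injective f := by
    intro a b hab
    have hBab : B a.1 = B b.1 := by
      have := congrArg Subtype.val hab
      rwa [hfapp, hfapp] at this
    have h0 : B (a.1 - b.1) = 0 := by rw [map_sub, hBab, sub_self]
    exact Subtype.ext (sub_eq_zero.mp (hBinj _ h0))
  have hrange : LinearMap.range f = ⊤ := by
    apply Submodule.eq_top_of_finrank_eq
    rw [LinearMap.finrank_range_of_inj hfinj]
    exact hnull
  have hfsurj : Function.Surjective f := LinearMap.range_eq_top.mp hrange
  -- main argument
  rw [Submodule.eq_bot_iff]
  rintro y ⟨⟨x, rfl⟩, hy2⟩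
  have hy2' : T' ((T + δT) x) = 0 := by simpa [LinearMap.mem_ker] using hy2
  have hy2'' : T' (T x) + T' (δT x) = 0 := by
    rw [← map_add]; simpa using hy2'
  -- T' (T (B x)) = 0
  have hTT : T' (T (B x)) = 0 := by
    have e : T' (T (B x)) = T' (T x) + T' (T (T' (δT x))) := by
      rw [hB]; simp [hCdef, map_add]
    rw [e, h2' (δT x)]
    exact hy2''
  have hTB : T (B x) = 0 := by
    have := h1' (B x)
    rw [hTT] at this
    simpa using this.symm
  obtain ⟨z, hz⟩ := hfsurj ⟨B x, by simpa [LinearMap.mem_ker] using hTB⟩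
  have hzx : B z.1 = B x := by
    have := congrArg Subtype.val hz
    rwa [hfapp] at this
  have h0 : B (z.1 - x) = 0 := by rw [map_sub, hzx, sub_self]
  have hzx' : z.1 = x := sub_eq_zero.mp (hBinj _ h0)
  have hfin : (T + δT) x = 0 := by rw [← hzx']; exact z.2
  simpa using hfin
end

section
/- Let X, Y be Hilbert spaces, T ∈ B(X,Y) with closed range and Moore–Penrose inverse T†, and δT ∈ B(X,Y) with ‖δT‖‖T†‖ < 1. If B := T†(I + δT T†)⁻¹ is a generalized inverse of T̄ := T + δT (i.e., T̄BT̄ = T̄ and BT̄B = B), then T̄ has closed range and Hyers–Ulam stability. -/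
open ContinuousLinearMap

set_option maxHeartbeats 800000

/-- If `B = T†(I + δT T†)⁻¹` is a generalized inverse of `T̄ = T + δT`, then
`T̄` has closed range and Hyers--Ulam stability. -/
theorem perturbed_closed_range_and_stability
    {X Y : Type*} [NormedAddCommGroup X] [InnerProductSpace ℝ X] [CompleteSpace X]
    [NormedAddCommGroup Y] [InnerProductSpace ℝ Y] [CompleteSpace Y]
    (T : X →L[ℝ] Y) (T' : Y →L[ℝ] X) (δT : X →L[ℝ] Y)
    (hclosed : IsClosed (LinearMap.range (T : X →ₗ[ℝ] Y) : Set Y))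
    (h1 : T ∘L T' ∘L T = T) (h2 : T' ∘L T ∘L T' = T')
    (h3 : adjoint (T ∘L T') = T ∘L T') (h4 : adjoint (T' ∘L T) = T' ∘L T)
    (hsmall : ‖δT‖ * ‖T'‖ < 1)
    (hgi1 : (T + δT) ∘L (T' ∘L Ring.inverse (1 + δT ∘L T')) ∘L (T + δT) = T + δT)
    (hgi2 : (T' ∘L Ring.inverse (1 + δT ∘L T')) ∘L (T + δT) ∘L
        (T' ∘L Ring.inverse (1 + δT ∘L T')) = T' ∘L Ring.inverse (1 + δT ∘L T')) :
    IsClosed (LinearMap.range ((T + δT : X →L[ℝ] Y) : X →ₗ[ℝ] Y) : Set Y) ∧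
      ∃ K : ℝ, 0 < K ∧ ∀ x : X, ∃ x₀ ∈ LinearMap.ker ((T + δT : X →L[ℝ] Y) : X →ₗ[ℝ] Y),
        ‖x - x₀‖ ≤ K * ‖(T + δT) x‖ := by
  set S := T + δT with hS
  set B := T' ∘L Ring.inverse (1 + δT ∘L T') with hB
  have key : ∀ x, S (B (S x)) = S x := by
    intro x
    have := ContinuousLinearMap.ext_iff.mp hgi1 x
    simpa using this
  constructor
  · have hset : (LinearMap.range (S : X →ₗ[ℝ] Y) : Set Y)
        = (ContinuousLinearMap.id ℝ Y - S ∘L B) ⁻¹' {0} := by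
      ext y
      constructor
      · rintro ⟨x, rfl⟩
        simp [sub_eq_zero, key x]
      · intro hy
        simp only [Set.mem_preimage, Set.mem_singleton_iff,
          ContinuousLinearMap.sub_apply, ContinuousLinearMap.id_apply,
          ContinuousLinearMap.comp_apply, sub_eq_zero] at hy
        exact ⟨B y, hy.symm⟩
    rw [hset]
    exact isClosed_singleton.preimage
      (ContinuousLinearMap.id ℝ Y - S ∘L B).continuous
  · refine ⟨‖B‖ + 1, by positivity, fun x => ?_⟩
    refine ⟨x - B (S x), ?_, ?_⟩
    · have : S (x - B (S x)) = 0 := by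
        rw [map_sub, key x, sub_self]
      exact LinearMap.mem_ker.mpr this
    · have h := B.le_opNorm (S x)
      have h2 : ‖B‖ * ‖S x‖ ≤ (‖B‖ + 1) * ‖S x‖ :=
        mul_le_mul_of_nonneg_right (by linarith) (norm_nonneg _)
      simpa [sub_sub_cancel] using h.trans h2
end
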